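/- arXiv:2509.02893 — 6 statements merged into one kernel-verified Lean document; each statement's English description precedes it below -/
import Mathlib

section
/- For a Riordan array D = (g, f) with entries d_{n,k} = [t^n] g·f^k, and a sequence A with generating function A(t) satisfying A(0) ≠ 0, the recurrence d_{n+1,k+1} = Σ_{j≥0} a_j d_{n,k+j} holds for all n, k ≥ 0 if and only if f(t) = t·A(f(t)). -/
open PowerSeries

/-- Composition `g ∘ f` of formal power series (meaningful when `f` has zero
constant term). -/
noncomputable def pcomp {K : Type*} [Field K] (g f : PowerSeries K) : PowerSeries K :=
  PowerSeries.mk fun n => ∑ k ∈ Finset.range (n + 1), coeff k g * coeff n (f ^ k)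

private lemma coeff_pow_eq_zero' {K : Type*} [Field K] {f : PowerSeries K}
    (hf0 : constantCoeff f = 0) {n k : ℕ} (h : n < k) : coeff n (f ^ k) = 0 := by
  have hX : (X : PowerSeries K) ∣ f := X_dvd_iff.mpr hf0
  have hd : (X : PowerSeries K) ^ k ∣ f ^ k := pow_dvd_pow_of_dvd hX k
  exact (X_pow_dvd_iff.mp hd) n h

private lemma coeff_mul_pcomp' {K : Type*} [Field K] {f A : PowerSeries K}
    (hf0 : constantCoeff f = 0) (h : PowerSeries K) (n : ℕ) :
    coeff n (h * pcomp A f) =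
      ∑ j ∈ Finset.range (n + 1), coeff j A * coeff n (h * f ^ j) := by
  rw [coeff_mul]
  have step : ∀ p ∈ Finset.HasAntidiagonal.antidiagonal n,
      coeff p.1 h * coeff p.2 (pcomp A f) =
      ∑ j ∈ Finset.range (n + 1), coeff j A * (coeff p.1 h * coeff p.2 (f ^ j)) := by
    intro p hp
    have hp2 : p.2 ≤ n := Finset.HasAntidiagonal.antidiagonal.snd_le hp
    have hc : coeff p.2 (pcomp A f) =
        ∑ j ∈ Finset.range (n + 1), coeff j A * coeff p.2 (f ^ j) := by
      rw [pcomp, coeff_mk]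
      refine Finset.sum_subset (Finset.range_subset_range.mpr (by omega)) ?_
      intro j _ hj
      have hlt : p.2 < j := by
        by_contra hle
        exact hj (Finset.mem_range.mpr (by omega))
      rw [coeff_pow_eq_zero' hf0 hlt, mul_zero]
    rw [hc, Finset.mul_sum]
    refine Finset.sum_congr rfl fun j _ => by ring
  rw [Finset.sum_congr rfl step, Finset.sum_comm]
  refine Finset.sum_congr rfl fun j _ => ?_
  rw [coeff_mul, Finset.mul_sum]

/-- A-sequence characterization of a Riordan array: the recurrence
`d_{n+1,k+1} = ∑_j a_j d_{n,k+j}` (with `d_{n,k} = [tⁿ] g·fᵏ`) holds for all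
`n, k ≥ 0` iff `f(t) = t·A(f(t))`. -/
theorem riordan_A_sequence {K : Type*} [Field K] [CharZero K]
    (g f A : PowerSeries K)
    (hg : constantCoeff g ≠ 0)
    (hf0 : constantCoeff f = 0) (hf1 : coeff 1 f ≠ 0)
    (hA : constantCoeff A ≠ 0) :
    (∀ n k : ℕ, coeff (n + 1) (g * f ^ (k + 1)) =
      ∑ j ∈ Finset.range (n + 1), coeff j A * coeff n (g * f ^ (k + j))) ↔
    f = X * pcomp A f := by
  constructor
  · intro H
    have hgne : g ≠ 0 := fun h => hg (by simp [h])
    have key : g * f = g * (X * pcomp A f) := by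
      ext m
      cases m with
      | zero =>
        simp [coeff_zero_eq_constantCoeff, map_mul, hf0]
      | succ n =>
        have h1 := H n 0
        simp only [zero_add] at h1
        rw [show g * (X * pcomp A f) = X * (g * pcomp A f) by ring,
          coeff_succ_X_mul, coeff_mul_pcomp' hf0 g n]
        calc coeff (n + 1) (g * f) = coeff (n + 1) (g * f ^ 1) := by rw [pow_one]
          _ = _ := h1
    exact mul_left_cancel₀ hgne key
  · intro hfX n k
    calc coeff (n + 1) (g * f ^ (k + 1))
        = coeff (n + 1) (X * (g * f ^ k * pcomp A f)) := by
          congr 1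
          calc g * f ^ (k + 1) = g * f ^ k * f := by rw [pow_succ, mul_assoc]
            _ = g * f ^ k * (X * pcomp A f) := congrArg (HMul.hMul (g * f ^ k)) hfX
            _ = X * (g * f ^ k * pcomp A f) := by ring
      _ = coeff n (g * f ^ k * pcomp A f) := coeff_succ_X_mul n _
      _ = ∑ j ∈ Finset.range (n + 1), coeff j A * coeff n (g * f ^ k * f ^ j) :=
          coeff_mul_pcomp' hf0 _ n
      _ = _ := Finset.sum_congr rfl fun j _ => by rw [mul_assoc, ← pow_add]
end

section
/- For any quasi-Riordan array [g, f] and any formal power series u ∈ K[[t]], the matrix-vector action satisfies [g, f]·u = g·u(0) + (f/t)·(u − u(0)) (first fundamental theorem of quasi-Riordan arrays). -/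
open PowerSeries

/-- `f/t`: the coefficient shift of a power series. -/
noncomputable def pdivX {K : Type*} [Field K] (f : PowerSeries K) : PowerSeries K :=
  PowerSeries.mk fun n => coeff (n + 1) f

/-- The column generating functions `(g, f, tf, t²f, …)` of the quasi-Riordan
array `[g, f]`. -/
noncomputable def qCol {K : Type*} [Field K] (g f : PowerSeries K) : ℕ → PowerSeries K
  | 0 => g
  | k + 1 => X ^ k * f

/-- First fundamental theorem of quasi-Riordan arrays: for every `u ∈ K[[t]]`,
the matrix-vector action of `[g, f]` on `u` is `g·u(0) + (f/t)·(u − u(0))`. -/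
theorem FFTQRA {K : Type*} [Field K] [CharZero K]
    (g f : PowerSeries K)
    (hg : constantCoeff g ≠ 0)
    (hf0 : constantCoeff f = 0) (hf1 : coeff 1 f ≠ 0)
    (u : PowerSeries K) :
    (PowerSeries.mk fun n =>
        ∑ k ∈ Finset.range (n + 1), coeff n (qCol g f k) * coeff k u) =
      g * C (constantCoeff u) + pdivX f * (u - C (constantCoeff u)) := by
  have hv : ∀ m, coeff m (u - C (constantCoeff u))
      = if m = 0 then 0 else coeff m u := by
    intro m
    cases m <;> simp [PowerSeries.coeff_C, coeff_zero_eq_constantCoeff]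
  ext n
  rw [coeff_mk, map_add, coeff_mul_C, coeff_mul,
    Finset.Nat.sum_antidiagonal_eq_sum_range_succ_mk,
    Finset.sum_range_succ', Finset.sum_range_succ]
  simp only [hv, Nat.sub_self, if_pos rfl, mul_zero, add_zero, qCol,
    coeff_zero_eq_constantCoeff, PowerSeries.constantCoeff_C]
  have key : ∑ i ∈ Finset.range n, coeff n (X ^ i * f) * coeff (i + 1) u
      = ∑ j ∈ Finset.range n,
          coeff j (pdivX f) * (if n - j = 0 then 0 else coeff (n - j) u) := by
    rw [← Finset.sum_range_reflect]
    apply Finset.sum_congr rfl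
    intro i hi
    rw [Finset.mem_range] at hi
    have h1 : n - 1 - i + 1 = n - i := by omega
    have h2 : n - (n - 1 - i) = i + 1 := by omega
    rw [coeff_X_pow_mul']
    simp only [pdivX, coeff_mk, h1, h2]
    rw [if_pos (by omega), if_neg (by omega)]
  rw [key, add_comm]
  simp
end

section
/- A Riordan array (g, f) satisfies the identity (g, f) = [g, f] · ([1] ⊕ (g, f)), where [g, f] is the quasi-Riordan array with columns (g, f, tf, t²f, …) and [1] ⊕ (g, f) is the direct sum of the 1×1 identity with the matrix of (g, f). -/
open PowerSeries

/-- The entries of the direct sum `[1] ⊕ (g, f)` of the `1×1` identity with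
the Riordan matrix of `(g, f)` (whose entries are `d_{n,k} = [tⁿ] g·fᵏ`). -/
noncomputable def dirSum {K : Type*} [Field K] (g f : PowerSeries K) : ℕ → ℕ → K
  | 0, 0 => 1
  | 0, _ + 1 => 0
  | _ + 1, 0 => 0
  | n + 1, k + 1 => coeff n (g * f ^ k)

/-- A Riordan array satisfies `(g, f) = [g, f] · ([1] ⊕ (g, f))` as a product
of lower-triangular matrices. -/
theorem riordan_quasi_factorization {K : Type*} [Field K] [CharZero K]
    (g f : PowerSeries K)
    (hg : constantCoeff g ≠ 0)
    (hf0 : constantCoeff f = 0) (hf1 : coeff 1 f ≠ 0) :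
    ∀ n k : ℕ, coeff n (g * f ^ k) =
      ∑ j ∈ Finset.range (n + 1), coeff n (qCol g f j) * dirSum g f j k := by
  intro n k
  cases k with
  | zero =>
    rw [Finset.sum_eq_single 0]
    · simp [qCol, dirSum]
    · rintro (_ | j) hj hj0
      · exact absurd rfl hj0
      · simp [dirSum]
    · intro h
      exact absurd (Finset.mem_range.2 (Nat.succ_pos n)) h
  | succ k =>
    have hf0' : coeff 0 f = 0 := by simpa using hf0
    have h1 : g * f ^ (k + 1) = (g * f ^ k) * f := by ring
    rw [h1, coeff_mul, Finset.Nat.sum_antidiagonal_eq_sum_range_succ_mk,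
        Finset.sum_range_succ, Nat.sub_self, hf0', mul_zero, add_zero,
        Finset.sum_range_succ']
    simp only [dirSum, qCol, mul_zero, add_zero]
    refine Finset.sum_congr rfl fun j hj => ?_
    have hj' : j < n := Finset.mem_range.1 hj
    have h2 : coeff n (X ^ j * f) = coeff (n - j) f := by
      have := coeff_X_pow_mul f j (n - j)
      rwa [Nat.sub_add_cancel hj'.le] at this
    rw [h2]
    ring
end

section
/- Fix ℓ ≥ 1. The inverse of the multiple Riordan array (g; f₁, …, f_ℓ) in the multiple Riordan group is (1/(g∘h̄); t·h̄/(f₁∘h̄), t·h̄/(f₂∘h̄), …, t·h̄/(f_ℓ∘h̄)), where h̄ is the compositional inverse of h = (f₁f₂⋯f_ℓ)^{1/ℓ}. -/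
open PowerSeries

/-- `g ∈ K[[t^ℓ]]`. -/
def InTl {K : Type*} [Field K] (ℓ : ℕ) (g : PowerSeries K) : Prop :=
  ∀ n : ℕ, ¬ ℓ ∣ n → coeff n g = 0

/-- A multiplier function: `f ∈ t·K[[t^ℓ]]` with `f'(0) ≠ 0`. -/
def IsMult {K : Type*} [Field K] (ℓ : ℕ) (f : PowerSeries K) : Prop :=
  constantCoeff f = 0 ∧ (∀ n : ℕ, n % ℓ ≠ 1 % ℓ → coeff n f = 0) ∧ coeff 1 f ≠ 0

/-- The multiple Riordan product, with chosen roots carried as data. -/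
noncomputable def mrMul {K : Type*} [Field K] {ℓ : ℕ}
    (p q : PowerSeries K × (Fin ℓ → PowerSeries K) × PowerSeries K) :
    PowerSeries K × (Fin ℓ → PowerSeries K) × PowerSeries K :=
  (p.1 * pcomp q.1 p.2.2,
    fun j => pdivX (p.2.1 j) * (pdivX p.2.2)⁻¹ * pcomp (q.2.1 j) p.2.2,
    pcomp q.2.2 p.2.2)

section lemmas
variable {K : Type*} [Field K]

lemma coeff_pcomp (g f : PowerSeries K) (n : ℕ) :
    coeff n (pcomp g f) = ∑ k ∈ Finset.range (n + 1), coeff k g * coeff n (f ^ k) := by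
  simp [pcomp]

lemma coeff_pdivX (f : PowerSeries K) (n : ℕ) :
    coeff n (pdivX f) = coeff (n + 1) f := by
  simp [pdivX]

lemma coeff_pow_zero {f : PowerSeries K} (hf : constantCoeff f = 0) {n k : ℕ} (h : n < k) :
    coeff n (f ^ k) = 0 :=
  X_pow_dvd_iff.mp (pow_dvd_pow_of_dvd (X_dvd_iff.mpr hf) k) n h

lemma coeff_aeval {f : PowerSeries K} (hf : constantCoeff f = 0) (P : Polynomial K) (n : ℕ) :
    coeff n (Polynomial.aeval f P)
      = ∑ i ∈ Finset.range (n + 1), P.coeff i * coeff n (f ^ i) := by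
  have hdeg : P.natDegree < max (P.natDegree + 1) (n + 1) :=
    lt_of_lt_of_le (Nat.lt_succ_self _) (le_max_left _ _)
  rw [Polynomial.aeval_def, Polynomial.eval₂_eq_sum_range' _ hdeg, map_sum]
  have hterm : ∀ i : ℕ, coeff n (algebraMap K (PowerSeries K) (P.coeff i) * f ^ i)
      = P.coeff i * coeff n (f ^ i) := by
    intro i
    rw [PowerSeries.algebraMap_apply, coeff_C_mul]
    simp
  simp only [hterm]
  refine (Finset.sum_subset (Finset.range_subset_range.mpr (le_max_right _ _)) ?_).symm
  intro i _ hi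
  rw [coeff_pow_zero hf (by simpa using hi), mul_zero]

lemma coeff_pcomp_trunc {f : PowerSeries K} (hf : constantCoeff f = 0) (g : PowerSeries K)
    {n m : ℕ} (hnm : n < m) :
    coeff n (pcomp g f) = coeff n (Polynomial.aeval f (trunc m g)) := by
  rw [coeff_aeval hf, coeff_pcomp]
  refine Finset.sum_congr rfl fun i hi => ?_
  rw [coeff_trunc]
  have : i < m := lt_of_lt_of_le (Finset.mem_range.mp hi) hnm
  rw [if_pos this]

lemma pcomp_one (f : PowerSeries K) : pcomp (1 : PowerSeries K) f = 1 := by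
  ext n
  rw [coeff_pcomp]
  rw [Finset.sum_eq_single 0]
  · simp
  · intro k _ hk
    rw [coeff_one, if_neg hk, zero_mul]
  · simp

lemma pcomp_C (c : K) (f : PowerSeries K) : pcomp (C c) f = C c := by
  ext n
  rw [coeff_pcomp, Finset.sum_eq_single 0]
  · simp [coeff_C, coeff_one]
  · intro k _ hk
    rw [coeff_C, if_neg hk, zero_mul]
  · simp

lemma pcomp_zero (f : PowerSeries K) : pcomp (0 : PowerSeries K) f = 0 := by
  ext n; simp [coeff_pcomp]

lemma pcomp_add (a b f : PowerSeries K) : pcomp (a + b) f = pcomp a f + pcomp b f := by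
  ext n
  simp [coeff_pcomp, add_mul, Finset.sum_add_distrib]

lemma pcomp_X {f : PowerSeries K} (hf : constantCoeff f = 0) : pcomp X f = f := by
  ext n
  rw [coeff_pcomp]
  rcases Nat.eq_zero_or_pos n with hn | hn
  · subst hn
    simpa [coeff_X] using hf.symm
  · rw [Finset.sum_eq_single 1]
    · simp [coeff_X]
    · intro k _ hk
      rw [coeff_X, if_neg hk, zero_mul]
    · intro hmem
      exact absurd (Finset.mem_range.mpr (by omega)) hmem

lemma pcomp_X_right (a : PowerSeries K) : pcomp a X = a := by
  ext n
  rw [coeff_pcomp, Finset.sum_eq_single n]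
  · simp [coeff_X_pow]
  · intro k _ hk
    rw [coeff_X_pow, if_neg (Ne.symm hk), mul_zero]
  · simp

lemma constantCoeff_pcomp (g f : PowerSeries K) :
    constantCoeff (pcomp g f) = constantCoeff g := by
  have := coeff_pcomp g f 0
  simp only [coeff_zero_eq_constantCoeff] at this ⊢
  simpa using this

lemma pcomp_mul {f : PowerSeries K} (hf : constantCoeff f = 0) (a b : PowerSeries K) :
    pcomp (a * b) f = pcomp a f * pcomp b f := by
  ext n
  set A := trunc (n + 1) a with hA
  set B := trunc (n + 1) b with hB
  have key : coeff n (pcomp a f * pcomp b f) = coeff n (Polynomial.aeval f (A * B)) := by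
    rw [map_mul (Polynomial.aeval f) A B, PowerSeries.coeff_mul, PowerSeries.coeff_mul]
    refine Finset.sum_congr rfl fun p hp => ?_
    have hp' := Finset.HasAntidiagonal.mem_antidiagonal.mp hp
    rw [coeff_pcomp_trunc hf a (show p.1 < n + 1 by omega),
      coeff_pcomp_trunc hf b (show p.2 < n + 1 by omega)]
  rw [key, coeff_aeval hf, coeff_pcomp]
  refine Finset.sum_congr rfl fun i hi => ?_
  have hi' : i ≤ n := by simpa [Nat.lt_succ_iff] using hi
  congr 1
  rw [Polynomial.coeff_mul, PowerSeries.coeff_mul]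
  refine Finset.sum_congr rfl fun p hp => ?_
  have hp' := Finset.HasAntidiagonal.mem_antidiagonal.mp hp
  rw [hA, hB, coeff_trunc, coeff_trunc,
    if_pos (show p.1 < n + 1 by omega), if_pos (show p.2 < n + 1 by omega)]

/-- `pcomp · f` as a ring homomorphism. -/
noncomputable def pcompHom (f : PowerSeries K) (hf : constantCoeff f = 0) :
    PowerSeries K →+* PowerSeries K where
  toFun a := pcomp a f
  map_one' := pcomp_one f
  map_mul' a b := pcomp_mul hf a b
  map_zero' := pcomp_zero f
  map_add' a b := pcomp_add a b f

lemma pcomp_aeval {f e : PowerSeries K} (hf : constantCoeff f = 0)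
    (he : constantCoeff e = 0) (P : Polynomial K) :
    pcomp (Polynomial.aeval f P) e = Polynomial.aeval (pcomp f e) P := by
  have : pcomp (Polynomial.aeval f P) e = pcompHom e he (Polynomial.aeval f P) := rfl
  rw [this, Polynomial.aeval_def, Polynomial.hom_eval₂]
  rw [Polynomial.aeval_def]
  congr 1
  refine RingHom.ext fun c => ?_
  show pcomp (algebraMap K (PowerSeries K) c) e = algebraMap K (PowerSeries K) c
  rw [PowerSeries.algebraMap_apply]
  simpa using pcomp_C (algebraMap K K c) e

lemma constantCoeff_pcomp_zero {f e : PowerSeries K} (hf : constantCoeff f = 0) :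
    constantCoeff (pcomp f e) = 0 := by
  rw [constantCoeff_pcomp]; exact hf

lemma pcomp_assoc {f e : PowerSeries K} (hf : constantCoeff f = 0)
    (he : constantCoeff e = 0) (a : PowerSeries K) :
    pcomp (pcomp a f) e = pcomp a (pcomp f e) := by
  ext n
  set A := trunc (n + 1) a with hA
  have step1 : coeff n (pcomp (pcomp a f) e)
      = coeff n (pcomp (Polynomial.aeval f A) e) := by
    rw [coeff_pcomp, coeff_pcomp]
    refine Finset.sum_congr rfl fun k hk => ?_
    rw [coeff_pcomp_trunc hf a (Finset.mem_range.mp hk)]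
  rw [step1, pcomp_aeval hf he,
    ← coeff_pcomp_trunc (constantCoeff_pcomp_zero hf) a (Nat.lt_succ_self n)]

lemma X_mul_pdivX {a : PowerSeries K} (ha : constantCoeff a = 0) :
    X * pdivX a = a := by
  ext n
  cases n with
  | zero =>
    rw [coeff_zero_eq_constantCoeff, map_mul, constantCoeff_X, zero_mul, ha]
  | succ m =>
    rw [coeff_succ_X_mul, coeff_pdivX]

lemma pdivX_mul {a : PowerSeries K} (ha : constantCoeff a = 0) (w : PowerSeries K) :
    pdivX (a * w) = pdivX a * w := by
  have haw : constantCoeff (a * w) = 0 := by rw [map_mul, ha, zero_mul]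
  have : (X : PowerSeries K) * pdivX (a * w) = X * (pdivX a * w) := by
    rw [X_mul_pdivX haw, ← mul_assoc, X_mul_pdivX ha]
  exact mul_left_cancel₀ X_ne_zero this

lemma constantCoeff_pdivX (a : PowerSeries K) :
    constantCoeff (pdivX a) = coeff 1 a := by
  rw [← coeff_zero_eq_constantCoeff, coeff_pdivX]

end lemmas

/-- The inverse of `(g; f₁, …, f_ℓ)` in the multiple Riordan group is
`(1/(g∘h̄); t·h̄/(f₁∘h̄), …, t·h̄/(f_ℓ∘h̄))`, where `h̄` is the compositional
inverse of `h = (f₁⋯f_ℓ)^{1/ℓ}`.  (Here `t·h̄/(f_j∘h̄) = h̄·((f_j∘h̄)/t)⁻¹`.) -/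
theorem multiple_riordan_inverse {K : Type*} [Field K] [CharZero K]
    (ℓ : ℕ) (hℓ : 1 ≤ ℓ)
    (g : PowerSeries K) (f : Fin ℓ → PowerSeries K) (h hbar : PowerSeries K)
    (hp : InTl ℓ g ∧ constantCoeff g ≠ 0 ∧ (∀ j, IsMult ℓ (f j)) ∧
      IsMult ℓ h ∧ h ^ ℓ = ∏ j, f j)
    (hbar0 : constantCoeff hbar = 0)
    (hinv1 : pcomp h hbar = X) (hinv2 : pcomp hbar h = X) :
    mrMul (g, f, h)
        ((pcomp g hbar)⁻¹, fun j => hbar * (pdivX (pcomp (f j) hbar))⁻¹, hbar) =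
      (1, fun _ => X, X) ∧
    mrMul ((pcomp g hbar)⁻¹, fun j => hbar * (pdivX (pcomp (f j) hbar))⁻¹, hbar)
        (g, f, h) =
      (1, fun _ => X, X) := by
  obtain ⟨-, hgc, hmf, hmh, -⟩ := hp
  have h0 : constantCoeff h = 0 := hmh.1
  have h1 : coeff 1 h ≠ 0 := hmh.2.2
  -- coefficient-1 relation from `pcomp h hbar = X`
  have hcoeff1 : coeff 1 h * coeff 1 hbar = 1 := by
    have := congrArg (coeff 1) hinv1
    rw [coeff_pcomp, coeff_X] at this
    simpa [Finset.sum_range_succ, coeff_one] using this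
  have hbar1 : coeff 1 hbar ≠ 0 := by
    intro hz
    rw [hz, mul_zero] at hcoeff1
    exact zero_ne_one hcoeff1
  constructor
  · -- forward product
    simp only [mrMul, Prod.mk.injEq]
    refine ⟨?_, ?_, hinv2⟩
    · -- first component
      have hG : constantCoeff (pcomp g hbar) ≠ 0 := by
        rw [constantCoeff_pcomp]; exact hgc
      have hGinv : pcomp g hbar * (pcomp g hbar)⁻¹ = 1 :=
        PowerSeries.mul_inv_cancel _ hG
      have := congrArg (fun z => pcomp z h) hGinv
      rw [pcomp_mul h0, pcomp_one, pcomp_assoc hbar0 h0, hinv2, pcomp_X_right] at this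
      exact this
    · funext j
      have hfj0 : constantCoeff (f j) = 0 := (hmf j).1
      have hfj1 : coeff 1 (f j) ≠ 0 := (hmf j).2.2
      set Fj := pcomp (f j) hbar with hFj
      set u := pdivX Fj with hu
      have hFj0 : constantCoeff Fj = 0 := constantCoeff_pcomp_zero hfj0
      -- coeff 1 of Fj
      have hcu : constantCoeff u = coeff 1 (f j) * coeff 1 hbar := by
        rw [hu, constantCoeff_pdivX, hFj, coeff_pcomp]
        simp [Finset.sum_range_succ, coeff_one]
      have hu0 : constantCoeff u ≠ 0 := by
        rw [hcu]; exact mul_ne_zero hfj1 hbar1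
      have hXu : (X : PowerSeries K) * u = Fj := X_mul_pdivX hFj0
      set Cc := pcomp u h with hCc
      set V := pcomp u⁻¹ h with hV
      have hCV : Cc * V = 1 := by
        rw [hCc, hV, ← pcomp_mul h0, PowerSeries.mul_inv_cancel _ hu0, pcomp_one]
      have hA : pdivX h * Cc = pdivX (f j) := by
        have hhC : h * Cc = f j := by
          have := congrArg (fun z => pcomp z h) hXu
          rw [pcomp_mul h0, pcomp_X h0] at this
          rw [hCc, this, hFj, pcomp_assoc hbar0 h0, hinv2, pcomp_X_right]
        have : (X : PowerSeries K) * (pdivX h * Cc) = X * pdivX (f j) := by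
          rw [X_mul_pdivX hfj0, ← mul_assoc, X_mul_pdivX h0, hhC]
        exact mul_left_cancel₀ X_ne_zero this
      have hB0 : constantCoeff (pdivX h) ≠ 0 := by
        rw [constantCoeff_pdivX]; exact h1
      have hB : pdivX h * (pdivX h)⁻¹ = 1 := PowerSeries.mul_inv_cancel _ hB0
      have hcompexp : pcomp (hbar * u⁻¹) h = X * V := by
        rw [pcomp_mul h0, hinv2, hV]
      rw [hcompexp]
      linear_combination (-(X * (pdivX h)⁻¹ * V)) * hA + (X * V * Cc) * hB + X * hCV
  · -- reverse product
    simp only [mrMul, Prod.mk.injEq]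
    refine ⟨?_, ?_, hinv1⟩
    · have hG : constantCoeff (pcomp g hbar) ≠ 0 := by
        rw [constantCoeff_pcomp]; exact hgc
      exact PowerSeries.inv_mul_cancel _ hG
    · funext j
      have hfj0 : constantCoeff (f j) = 0 := (hmf j).1
      have hfj1 : coeff 1 (f j) ≠ 0 := (hmf j).2.2
      set Fj := pcomp (f j) hbar with hFj
      set u := pdivX Fj with hu
      have hFj0 : constantCoeff Fj = 0 := constantCoeff_pcomp_zero hfj0
      have hcu : constantCoeff u = coeff 1 (f j) * coeff 1 hbar := by
        rw [hu, constantCoeff_pdivX, hFj, coeff_pcomp]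
        simp [Finset.sum_range_succ, coeff_one]
      have hu0 : constantCoeff u ≠ 0 := by
        rw [hcu]; exact mul_ne_zero hfj1 hbar1
      have huu : u * u⁻¹ = 1 := PowerSeries.mul_inv_cancel _ hu0
      have hXu : (X : PowerSeries K) * u = Fj := X_mul_pdivX hFj0
      have hP0 : constantCoeff (pdivX hbar) ≠ 0 := by
        rw [constantCoeff_pdivX]; exact hbar1
      have hPP : pdivX hbar * (pdivX hbar)⁻¹ = 1 := PowerSeries.mul_inv_cancel _ hP0
      rw [pdivX_mul hbar0, ← hXu]
      linear_combination (X * u * u⁻¹) * hPP + X * huu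
end

section
/- For a multiple Riordan array (g; f₁, …, f_ℓ) with associated matrix, the generating function of the row sums is g·(1 + f₁ + f₁f₂ + ⋯ + f₁f₂⋯f_{ℓ−1})/(1 − f₁f₂⋯f_ℓ). -/
open PowerSeries

/-- The column factor `∏_j f_j^{⌊(k+ℓ-1-j)/ℓ⌋}`. -/
noncomputable def Tfun {K : Type*} [Field K] (ℓ : ℕ) (f : ℕ → PowerSeries K) (k : ℕ) : PowerSeries K :=
  ∏ j ∈ Finset.range ℓ, f j ^ ((k + ℓ - 1 - j) / ℓ)

lemma Tfun_def {K : Type*} [Field K] (ℓ : ℕ) (f : ℕ → PowerSeries K) (k : ℕ) :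
    Tfun ℓ f k = ∏ j ∈ Finset.range ℓ, f j ^ ((k + ℓ - 1 - j) / ℓ) := rfl

lemma sum_range_add_div (ℓ : ℕ) (hℓ : 1 ≤ ℓ) (k : ℕ) :
    ∑ i ∈ Finset.range ℓ, (k + i) / ℓ = k := by
  induction k with
  | zero =>
    apply Finset.sum_eq_zero
    intro i hi
    simpa using Nat.div_eq_of_lt (Finset.mem_range.mp hi)
  | succ k ih =>
    have h1 : ∑ i ∈ Finset.range (ℓ + 1), (k + i) / ℓ
        = (∑ i ∈ Finset.range ℓ, (k + (i + 1)) / ℓ) + (k + 0) / ℓ :=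
      Finset.sum_range_succ' _ _
    have h2 : ∑ i ∈ Finset.range (ℓ + 1), (k + i) / ℓ
        = (∑ i ∈ Finset.range ℓ, (k + i) / ℓ) + (k + ℓ) / ℓ :=
      Finset.sum_range_succ _ _
    have h3 : (k + ℓ) / ℓ = k / ℓ + 1 := Nat.add_div_right k hℓ
    have h4 : ∑ i ∈ Finset.range ℓ, (k + 1 + i) / ℓ
        = ∑ i ∈ Finset.range ℓ, (k + (i + 1)) / ℓ := by
      apply Finset.sum_congr rfl
      intro i _
      congr 1
      omega
    rw [h4]
    have h5 : (∑ i ∈ Finset.range ℓ, (k + (i + 1)) / ℓ) + (k + 0) / ℓ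
        = k + (k / ℓ + 1) := by rw [← h1, h2, ih, h3]
    simp only [Nat.add_zero] at h5
    have h6 : (∑ i ∈ Finset.range ℓ, (k + (i + 1)) / ℓ) + k / ℓ = (k + 1) + k / ℓ := by
      rw [h5]; ring
    exact Nat.add_right_cancel h6

lemma exp_sum (ℓ : ℕ) (hℓ : 1 ≤ ℓ) (k : ℕ) :
    ∑ j ∈ Finset.range ℓ, (k + ℓ - 1 - j) / ℓ = k := by
  rw [← Finset.sum_range_reflect]
  have h : ∀ j ∈ Finset.range ℓ, (k + ℓ - 1 - (ℓ - 1 - j)) / ℓ = (k + j) / ℓ := by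
    intro j hj
    have := Finset.mem_range.mp hj
    congr 1
    omega
  rw [Finset.sum_congr rfl h]
  exact sum_range_add_div ℓ hℓ k

lemma T_van {K : Type*} [Field K] (ℓ : ℕ) (hℓ : 1 ≤ ℓ) (f : ℕ → PowerSeries K)
    (hf0 : ∀ j < ℓ, constantCoeff (f j) = 0) (n k : ℕ) (hnk : n < k)
    (h : PowerSeries K) : coeff n (h * Tfun ℓ f k) = 0 := by
  have hdvd : (X : PowerSeries K) ^ k ∣ Tfun ℓ f k := by
    have hdj : ∀ j ∈ Finset.range ℓ,
        (X : PowerSeries K) ^ ((k + ℓ - 1 - j) / ℓ) ∣ f j ^ ((k + ℓ - 1 - j) / ℓ) := by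
      intro j hj
      exact pow_dvd_pow_of_dvd (X_dvd_iff.mpr (hf0 j (Finset.mem_range.mp hj))) _
    calc (X : PowerSeries K) ^ k
        = ∏ j ∈ Finset.range ℓ, (X : PowerSeries K) ^ ((k + ℓ - 1 - j) / ℓ) := by
          rw [Finset.prod_pow_eq_pow_sum, exp_sum ℓ hℓ k]
      _ ∣ Tfun ℓ f k := Finset.prod_dvd_prod_of_dvd _ _ hdj
  exact (X_pow_dvd_iff.mp (hdvd.mul_left h)) n hnk

lemma T_shift {K : Type*} [Field K] (ℓ : ℕ) (hℓ : 1 ≤ ℓ) (f : ℕ → PowerSeries K) (k : ℕ) :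
    Tfun ℓ f (k + ℓ) = (∏ j ∈ Finset.range ℓ, f j) * Tfun ℓ f k := by
  rw [Tfun_def, Tfun_def, ← Finset.prod_mul_distrib]
  apply Finset.prod_congr rfl
  intro j hj
  have hj' := Finset.mem_range.mp hj
  have he : (k + ℓ + ℓ - 1 - j) / ℓ = (k + ℓ - 1 - j) / ℓ + 1 := by
    have h1 : k + ℓ + ℓ - 1 - j = (k + ℓ - 1 - j) + ℓ := by omega
    rw [h1, Nat.add_div_right _ hℓ]
  rw [he, pow_succ']

lemma T_small {K : Type*} [Field K] (ℓ : ℕ) (hℓ : 1 ≤ ℓ) (f : ℕ → PowerSeries K) (m : ℕ)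
    (hm : m ≤ ℓ) : Tfun ℓ f m = ∏ j ∈ Finset.range m, f j := by
  classical
  have h1 : Tfun ℓ f m = ∏ j ∈ Finset.range ℓ, if j < m then f j else 1 := by
    rw [Tfun_def]
    apply Finset.prod_congr rfl
    intro j hj
    have hj' := Finset.mem_range.mp hj
    by_cases h : j < m
    · have he : (m + ℓ - 1 - j) / ℓ = 1 := by
        apply Nat.div_eq_of_lt_le <;> omega
      simp [h, he]
    · have he : (m + ℓ - 1 - j) / ℓ = 0 := Nat.div_eq_of_lt (by omega)
      simp [h, he]
  rw [h1, ← Finset.prod_filter]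
  congr 1
  ext j
  simp only [Finset.mem_filter, Finset.mem_range]
  omega

/-- Row sums of a multiple Riordan array: the column `k` of `(g; f₁, …, f_ℓ)`
has generating function `g·∏_j f_j^{⌊(k+ℓ-1-j)/ℓ⌋}` (for `0 ≤ j ≤ ℓ-1`), and
the generating function of the row sums is
`g·(1 + f₁ + f₁f₂ + ⋯ + f₁⋯f_{ℓ−1})/(1 − f₁f₂⋯f_ℓ)`. -/
theorem multiple_riordan_row_sums {K : Type*} [Field K] [CharZero K]
    (ℓ : ℕ) (hℓ : 1 ≤ ℓ)
    (g : PowerSeries K) (f : ℕ → PowerSeries K)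
    (hg : InTl ℓ g) (hg0 : constantCoeff g ≠ 0)
    (hf : ∀ j < ℓ, IsMult ℓ (f j)) :
    (PowerSeries.mk fun n => ∑ k ∈ Finset.range (n + 1),
        coeff n (g * ∏ j ∈ Finset.range ℓ, f j ^ ((k + ℓ - 1 - j) / ℓ))) =
      g * (∑ m ∈ Finset.range ℓ, ∏ j ∈ Finset.range m, f j) *
        (1 - ∏ j ∈ Finset.range ℓ, f j)⁻¹ := by
  classical
  have hf0 : ∀ j < ℓ, constantCoeff (f j) = 0 := fun j hj => (hf j hj).1
  set P : PowerSeries K := ∏ j ∈ Finset.range ℓ, f j with hP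
  set S : PowerSeries K := ∑ m ∈ Finset.range ℓ, ∏ j ∈ Finset.range m, f j with hS
  have hPc : constantCoeff P = 0 := by
    rw [hP, map_prod]
    exact Finset.prod_eq_zero (Finset.mem_range.mpr (by omega : 0 < ℓ)) (hf0 0 hℓ)
  have hunit : constantCoeff (1 - P) ≠ 0 := by
    simp [hPc]
  rw [PowerSeries.eq_mul_inv_iff_mul_eq hunit]
  ext n
  simp only [← Tfun_def]
  set N := n + ℓ + 1 with hN
  set U : PowerSeries K := ∑ k ∈ Finset.range N, Tfun ℓ f k with hU
  have hS' : S = ∑ k ∈ Finset.range ℓ, Tfun ℓ f k := by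
    rw [hS]
    apply Finset.sum_congr rfl
    intro m hm
    exact (T_small ℓ hℓ f m (le_of_lt (Finset.mem_range.mp hm))).symm
  have key : (g * U) * (1 - P) = g * S - g * ∑ k ∈ Finset.Ico N (N + ℓ), Tfun ℓ f k := by
    have t2 : U * P = ∑ k ∈ Finset.Ico ℓ (N + ℓ), Tfun ℓ f k := by
      rw [hU, Finset.sum_mul]
      have hc : ∀ k ∈ Finset.range N, Tfun ℓ f k * P = Tfun ℓ f (k + ℓ) := by
        intro k _
        rw [T_shift ℓ hℓ f k, mul_comm]
      rw [Finset.sum_congr rfl hc, Finset.sum_Ico_eq_sum_range, Nat.add_sub_cancel]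
      apply Finset.sum_congr rfl
      intro k _
      rw [add_comm]
    have t1 : U * (1 - P) = S - ∑ k ∈ Finset.Ico N (N + ℓ), Tfun ℓ f k := by
      rw [mul_sub, mul_one, t2]
      have e1 : (∑ k ∈ Finset.Ico 0 ℓ, Tfun ℓ f k) + ∑ k ∈ Finset.Ico ℓ N, Tfun ℓ f k
          = ∑ k ∈ Finset.Ico 0 N, Tfun ℓ f k :=
        Finset.sum_Ico_consecutive _ (Nat.zero_le _) (by omega)
      have e2 : (∑ k ∈ Finset.Ico ℓ N, Tfun ℓ f k) + ∑ k ∈ Finset.Ico N (N + ℓ), Tfun ℓ f k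
          = ∑ k ∈ Finset.Ico ℓ (N + ℓ), Tfun ℓ f k :=
        Finset.sum_Ico_consecutive _ (by omega) (by omega)
      rw [hU, hS', Finset.range_eq_Ico, Finset.range_eq_Ico, ← e1, ← e2]
      abel
    rw [mul_assoc, t1, mul_sub]
  have c1 : coeff n (g * ∑ k ∈ Finset.Ico N (N + ℓ), Tfun ℓ f k) = 0 := by
    rw [Finset.mul_sum, map_sum]
    apply Finset.sum_eq_zero
    intro k hk
    have hk' := Finset.mem_Ico.mp hk
    exact T_van ℓ hℓ f hf0 n k (by omega) g
  have c2 : coeff n ((PowerSeries.mk fun n => ∑ k ∈ Finset.range (n + 1),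
        coeff n (g * Tfun ℓ f k)) * (1 - P)) = coeff n ((g * U) * (1 - P)) := by
    rw [coeff_mul, coeff_mul]
    apply Finset.sum_congr rfl
    intro pq hpq
    have hp : pq.1 ≤ n := by
      have := Finset.HasAntidiagonal.mem_antidiagonal.mp hpq
      omega
    congr 1
    rw [coeff_mk, hU, Finset.mul_sum, map_sum]
    apply Finset.sum_subset
    · exact Finset.range_subset_range.mpr (by omega)
    · intro k hk hk2
      have h1 := Finset.mem_range.mp hk
      have h2 : ¬ k < pq.1 + 1 := fun h => hk2 (Finset.mem_range.mpr h)
      exact T_van ℓ hℓ f hf0 pq.1 k (by omega) g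
  rw [c2, key, map_sub, c1, sub_zero]
end

section
/- The set of multiple almost-Riordan arrays (b | g; f₁, …, f_ℓ) is closed under the multiplication (b|g;f₁,…,f_ℓ)(c|d;h₁,…,h_ℓ) = (c(0)·b + (tg/f_ℓ)(c(h) − c(0)) | g·d(h); (f₁/h)h₁(h), …, (f_ℓ/h)h_ℓ(h)), where h = (f₁⋯f_ℓ)^{1/ℓ}, and this multiplication makes the set a group with identity (1 | 1; t, …, t). -/
open PowerSeries

/-- A multiple almost-Riordan array `(b | g; f₁, …, f_ℓ)` (with `ℓ = m + 1`),
together with its chosen `ℓ`-th root `h` of `f₁⋯f_ℓ`. -/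
def IsMaR {K : Type*} [Field K] (m : ℕ)
    (p : PowerSeries K × PowerSeries K × (Fin (m + 1) → PowerSeries K) × PowerSeries K) :
    Prop :=
  InTl (m + 1) p.1 ∧ constantCoeff p.1 ≠ 0 ∧
    InTl (m + 1) p.2.1 ∧ constantCoeff p.2.1 ≠ 0 ∧
    (∀ j, IsMult (m + 1) (p.2.2.1 j)) ∧ IsMult (m + 1) p.2.2.2 ∧
    p.2.2.2 ^ (m + 1) = ∏ j, p.2.2.1 j

/-- The multiple almost-Riordan product
`(b|g;f₁,…,f_ℓ)(c|d;h₁,…,h_ℓ) =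
 (c(0)·b + (tg/f_ℓ)(c(h) − c(0)) | g·d(h); (f₁/h)h₁(h), …, (f_ℓ/h)h_ℓ(h))`. -/
noncomputable def maMul {K : Type*} [Field K] {m : ℕ}
    (p q : PowerSeries K × PowerSeries K × (Fin (m + 1) → PowerSeries K) × PowerSeries K) :
    PowerSeries K × PowerSeries K × (Fin (m + 1) → PowerSeries K) × PowerSeries K :=
  (C (constantCoeff q.1) * p.1 +
      p.2.1 * (pdivX (p.2.2.1 (Fin.last m)))⁻¹ *
        (pcomp q.1 p.2.2.2 - C (constantCoeff q.1)),
    p.2.1 * pcomp q.2.1 p.2.2.2,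
    fun j => pdivX (p.2.2.1 j) * (pdivX p.2.2.2)⁻¹ * pcomp (q.2.2.1 j) p.2.2.2,
    pcomp q.2.2.2 p.2.2.2)

namespace MaR

variable {K : Type*} [Field K]

lemma coeff_pcomp (g f : PowerSeries K) (n : ℕ) :
    coeff n (pcomp g f) = ∑ k ∈ Finset.range (n + 1), coeff k g * coeff n (f ^ k) := by
  simp [pcomp]

lemma coeff_pow_eq_zero {f : PowerSeries K} (hf : constantCoeff f = 0) {k j : ℕ}
    (hj : j < k) : coeff j (f ^ k) = 0 := by
  have : (X : PowerSeries K) ^ k ∣ f ^ k :=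
    pow_dvd_pow_of_dvd (X_dvd_iff.mpr hf) k
  exact X_pow_dvd_iff.mp this j hj

lemma coeff_pcomp_of_lt {f : PowerSeries K} (hf : constantCoeff f = 0)
    (g : PowerSeries K) {n N : ℕ} (hN : n < N) :
    coeff n (pcomp g f) = ∑ k ∈ Finset.range N, coeff k g * coeff n (f ^ k) := by
  rw [coeff_pcomp]
  apply Finset.sum_subset (Finset.range_subset_range.mpr hN)
  intro k hk hk'
  rw [Finset.mem_range] at hk'
  rw [coeff_pow_eq_zero hf (by omega), mul_zero]

lemma pcomp_add (a b f : PowerSeries K) : pcomp (a + b) f = pcomp a f + pcomp b f := by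
  ext n
  simp [coeff_pcomp, add_mul, Finset.sum_add_distrib]

lemma pcomp_sub (a b f : PowerSeries K) : pcomp (a - b) f = pcomp a f - pcomp b f := by
  ext n
  simp [coeff_pcomp, sub_mul, Finset.sum_sub_distrib]

lemma pcomp_C_mul (c : K) (a f : PowerSeries K) :
    pcomp (C c * a) f = C c * pcomp a f := by
  ext n
  simp [coeff_pcomp, Finset.mul_sum, mul_assoc]

lemma pcomp_sum {ι : Type*} (s : Finset ι) (g : ι → PowerSeries K) (f : PowerSeries K) :
    pcomp (∑ i ∈ s, g i) f = ∑ i ∈ s, pcomp (g i) f := by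
  ext n
  simp only [coeff_pcomp, map_sum, Finset.sum_mul]
  rw [Finset.sum_comm]

lemma pcomp_C (c : K) (f : PowerSeries K) : pcomp (C c) f = C c := by
  ext n
  simp only [coeff_pcomp, coeff_C, ite_mul, zero_mul]
  rw [Finset.sum_ite_eq' (Finset.range (n + 1)) 0]
  simp [coeff_one, coeff_C]

lemma pcomp_one (f : PowerSeries K) : pcomp 1 f = 1 := by
  rw [← map_one (C : K →+* PowerSeries K), pcomp_C]

lemma pcomp_X {f : PowerSeries K} (hf : constantCoeff f = 0) : pcomp X f = f := by
  ext n
  simp only [coeff_pcomp, coeff_X, ite_mul, zero_mul, one_mul]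
  rw [Finset.sum_ite_eq' (Finset.range (n + 1)) 1]
  cases n with
  | zero => simpa using hf.symm
  | succ n => simp

lemma pcomp_id (a : PowerSeries K) : pcomp a X = a := by
  ext n
  simp only [coeff_pcomp, coeff_X_pow]
  rw [Finset.sum_congr rfl (fun k _ => by rw [mul_ite, mul_one, mul_zero]),
    Finset.sum_ite_eq (Finset.range (n + 1)) n]
  simp

lemma constantCoeff_pcomp (a f : PowerSeries K) :
    constantCoeff (pcomp a f) = constantCoeff a := by
  have := coeff_pcomp a f 0
  simp only [Finset.range_one, Finset.sum_singleton, pow_zero, coeff_zero_eq_constantCoeff,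
    map_one, mul_one] at this
  simpa [coeff_zero_eq_constantCoeff] using this

lemma coeff_one_pcomp (a f : PowerSeries K) :
    coeff 1 (pcomp a f) = coeff 1 a * coeff 1 f := by
  rw [coeff_pcomp]
  simp [Finset.sum_range_succ]

lemma coeff_eval₂ {f : PowerSeries K} (hf : constantCoeff f = 0) (P : Polynomial K)
    {n N : ℕ} (hn : n < N) (hP : P.natDegree < N) :
    coeff n (Polynomial.eval₂ (C : K →+* PowerSeries K) f P) =
      ∑ k ∈ Finset.range N, P.coeff k * coeff n (f ^ k) := by
  rw [Polynomial.eval₂_eq_sum_range' (C : K →+* PowerSeries K) hP f, map_sum]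
  exact Finset.sum_congr rfl fun k _ => by rw [coeff_C_mul]

lemma pcomp_eq_eval₂ {f : PowerSeries K} (hf : constantCoeff f = 0) (a : PowerSeries K)
    {n N : ℕ} (hn : n < N) :
    coeff n (pcomp a f) = coeff n (Polynomial.eval₂ (C : K →+* PowerSeries K) f (trunc N a)) := by
  obtain ⟨N', rfl⟩ : ∃ N', N = N' + 1 := ⟨N - 1, by omega⟩
  rw [coeff_eval₂ hf _ hn (natDegree_trunc_lt a N'), coeff_pcomp_of_lt hf a hn]
  refine Finset.sum_congr rfl fun k hk => ?_
  rw [Finset.mem_range] at hk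
  rw [coeff_trunc, if_pos hk]

lemma coeff_eval₂_congr {f : PowerSeries K} (hf : constantCoeff f = 0)
    {P Q : Polynomial K} {n : ℕ} (h : ∀ k ≤ n, P.coeff k = Q.coeff k) :
    coeff n (Polynomial.eval₂ (C : K →+* PowerSeries K) f P) = coeff n (Polynomial.eval₂ (C : K →+* PowerSeries K) f Q) := by
  set N := max P.natDegree Q.natDegree + max n 0 + 1 with hN
  have hPN : P.natDegree < N := by omega
  have hQN : Q.natDegree < N := by omega
  rw [coeff_eval₂ hf P (by omega) hPN, coeff_eval₂ hf Q (by omega) hQN]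
  refine Finset.sum_congr rfl fun k _ => ?_
  rcases le_or_gt k n with hk | hk
  · rw [h k hk]
  · rw [coeff_pow_eq_zero hf hk, mul_zero, mul_zero]

lemma pcomp_mul {f : PowerSeries K} (hf : constantCoeff f = 0) (a b : PowerSeries K) :
    pcomp (a * b) f = pcomp a f * pcomp b f := by
  ext n
  set N := n + 1 with hN
  have h1 : coeff n (pcomp (a * b) f) =
      coeff n (Polynomial.eval₂ (C : K →+* PowerSeries K) f (trunc N (a * b))) :=
    pcomp_eq_eval₂ hf _ (by omega)
  have h2 : ∀ k ≤ n, (trunc N (a * b)).coeff k = (trunc N a * trunc N b).coeff k := by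
    intro k hk
    rw [coeff_trunc, if_pos (by omega), Polynomial.coeff_mul, PowerSeries.coeff_mul]
    refine Finset.sum_congr rfl fun p hp => ?_
    rw [Finset.HasAntidiagonal.mem_antidiagonal] at hp
    rw [coeff_trunc, coeff_trunc, if_pos (by omega), if_pos (by omega)]
  rw [h1, coeff_eval₂_congr hf h2, Polynomial.eval₂_mul, PowerSeries.coeff_mul,
    PowerSeries.coeff_mul]
  refine Finset.sum_congr rfl fun p hp => ?_
  rw [Finset.HasAntidiagonal.mem_antidiagonal] at hp
  rw [← pcomp_eq_eval₂ hf a (show p.1 < N by omega),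
    ← pcomp_eq_eval₂ hf b (show p.2 < N by omega)]

lemma pcomp_pow {f : PowerSeries K} (hf : constantCoeff f = 0) (a : PowerSeries K) (k : ℕ) :
    pcomp (a ^ k) f = (pcomp a f) ^ k := by
  induction k with
  | zero => simpa using pcomp_one f
  | succ k ih => rw [pow_succ, pow_succ, pcomp_mul hf, ih]

lemma pcomp_prod {ι : Type*} {f : PowerSeries K} (hf : constantCoeff f = 0)
    (s : Finset ι) (g : ι → PowerSeries K) :
    pcomp (∏ i ∈ s, g i) f = ∏ i ∈ s, pcomp (g i) f := by
  classical
  induction s using Finset.induction_on with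
  | empty => simpa using pcomp_one f
  | @insert x s hx ih =>
      rw [Finset.prod_insert hx, Finset.prod_insert hx, pcomp_mul hf, ih]

lemma pcomp_assoc {h f : PowerSeries K} (hh : constantCoeff h = 0)
    (hf : constantCoeff f = 0) (a : PowerSeries K) :
    pcomp (pcomp a h) f = pcomp a (pcomp h f) := by
  ext n
  set N := n + 1 with hN
  have key : Polynomial.eval₂ (C : K →+* PowerSeries K) h (trunc N a) =
      ∑ i ∈ Finset.range N, C (coeff i a) * h ^ i := by
    rw [Polynomial.eval₂_eq_sum_range' (C : K →+* PowerSeries K) (natDegree_trunc_lt a n) h]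
    exact Finset.sum_congr rfl fun k hk => by
      rw [Finset.mem_range] at hk
      rw [coeff_trunc, if_pos hk]
  have hhf : constantCoeff (pcomp h f) = 0 := by rw [constantCoeff_pcomp]; exact hh
  have lhs : coeff n (pcomp (pcomp a h) f) =
      coeff n (pcomp (Polynomial.eval₂ (C : K →+* PowerSeries K) h (trunc N a)) f) := by
    rw [coeff_pcomp_of_lt hf _ (show n < N by omega),
      coeff_pcomp_of_lt hf _ (show n < N by omega)]
    refine Finset.sum_congr rfl fun k hk => ?_
    rw [Finset.mem_range] at hk
    rw [← pcomp_eq_eval₂ hh a (show k < N by omega)]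
  rw [lhs, key, pcomp_sum]
  have : ∀ i ∈ Finset.range N, pcomp (C (coeff i a) * h ^ i) f =
      C (coeff i a) * (pcomp h f) ^ i := fun i _ => by
    rw [pcomp_C_mul, pcomp_pow hf]
  rw [Finset.sum_congr rfl this, map_sum, coeff_pcomp_of_lt hhf a (show n < N by omega)]
  exact Finset.sum_congr rfl fun k _ => by rw [coeff_C_mul]

lemma inv_eq_of_mul_eq_one {u v : PowerSeries K} (hu : constantCoeff u ≠ 0)
    (h : u * v = 1) : u⁻¹ = v := by
  have := (PowerSeries.eq_inv_iff_mul_eq_one (φ := v) (ψ := u) hu).mpr (by rw [mul_comm]; exact h)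
  exact this.symm

lemma pcomp_inv {f a : PowerSeries K} (hf : constantCoeff f = 0)
    (ha : constantCoeff a ≠ 0) : pcomp a⁻¹ f = (pcomp a f)⁻¹ := by
  refine (inv_eq_of_mul_eq_one (by rw [constantCoeff_pcomp]; exact ha) ?_).symm
  rw [← pcomp_mul hf, PowerSeries.mul_inv_cancel a ha, pcomp_one]

lemma mul_inv' {a b : PowerSeries K} (ha : constantCoeff a ≠ 0)
    (hb : constantCoeff b ≠ 0) : (a * b)⁻¹ = a⁻¹ * b⁻¹ := by
  refine inv_eq_of_mul_eq_one (by simp [ha, hb]) ?_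
  have : a * b * (a⁻¹ * b⁻¹) = (a * a⁻¹) * (b * b⁻¹) := by ring
  rw [this, PowerSeries.mul_inv_cancel a ha, PowerSeries.mul_inv_cancel b hb, one_mul]

lemma prod_inv' {ι : Type*} (s : Finset ι) (a : ι → PowerSeries K)
    (h : ∀ j ∈ s, constantCoeff (a j) ≠ 0) :
    (∏ j ∈ s, a j)⁻¹ = ∏ j ∈ s, (a j)⁻¹ := by
  classical
  induction s using Finset.induction_on with
  | empty => simpa using inv_eq_of_mul_eq_one (by simp) (by simp)
  | @insert x s hx ih =>
      rw [Finset.prod_insert hx, Finset.prod_insert hx,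
        mul_inv' (h x (Finset.mem_insert_self x s)) (by
          rw [map_prod]
          exact Finset.prod_ne_zero_iff.mpr fun j hj => h j (Finset.mem_insert_of_mem hj)),
        ih fun j hj => h j (Finset.mem_insert_of_mem hj)]

lemma coeff_pdivX (f : PowerSeries K) (n : ℕ) : coeff n (pdivX f) = coeff (n + 1) f := by
  simp [pdivX]

lemma constantCoeff_pdivX (f : PowerSeries K) :
    constantCoeff (pdivX f) = coeff 1 f := by
  rw [← coeff_zero_eq_constantCoeff, coeff_pdivX]

lemma X_mul_pdivX {f : PowerSeries K} (hf : constantCoeff f = 0) :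
    X * pdivX f = f := by
  ext n
  cases n with
  | zero => simp [hf]
  | succ n => rw [coeff_succ_X_mul, coeff_pdivX]

lemma pdivX_X_mul (w : PowerSeries K) : pdivX (X * w) = w := by
  ext n
  rw [coeff_pdivX, coeff_succ_X_mul]

lemma pdivX_X : pdivX (X : PowerSeries K) = 1 := by
  have : (X : PowerSeries K) = X * 1 := by rw [mul_one]
  rw [this, pdivX_X_mul]

lemma pdivX_mul_left {P : PowerSeries K} (hP : constantCoeff P = 0) (A : PowerSeries K) :
    pdivX (A * P) = A * pdivX P := by
  conv_lhs => rw [← X_mul_pdivX hP, show A * (X * pdivX P) = X * (A * pdivX P) by ring,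
    pdivX_X_mul]

lemma pdivX_pcomp {a f : PowerSeries K} (ha : constantCoeff a = 0)
    (hf : constantCoeff f = 0) :
    pdivX (pcomp a f) = pdivX f * pcomp (pdivX a) f := by
  have h2 : ∀ w : PowerSeries K, f * w = X * (pdivX f * w) := by
    intro w
    conv_lhs => rw [← X_mul_pdivX hf]
    rw [mul_assoc]
  have h1 : pcomp a f = X * (pdivX f * pcomp (pdivX a) f) := by
    conv_lhs => rw [← X_mul_pdivX ha, pcomp_mul hf, pcomp_X hf]
    exact h2 _
  rw [h1, pdivX_X_mul]

/-- coefficients vanish away from residue `r` mod `ℓ`. -/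
def Shape (ℓ : ℕ) (r : ZMod ℓ) (a : PowerSeries K) : Prop :=
  ∀ n : ℕ, (n : ZMod ℓ) ≠ r → coeff n a = 0

variable {ℓ : ℕ}

lemma Shape.mul {r s : ZMod ℓ} {a b : PowerSeries K} (ha : Shape ℓ r a) (hb : Shape ℓ s b) :
    Shape ℓ (r + s) (a * b) := by
  intro n hn
  rw [PowerSeries.coeff_mul]
  refine Finset.sum_eq_zero fun p hp => ?_
  rw [Finset.HasAntidiagonal.mem_antidiagonal] at hp
  by_cases h1 : (p.1 : ZMod ℓ) = r
  · have h2 : (p.2 : ZMod ℓ) ≠ s := by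
      intro h2
      apply hn
      rw [← hp, Nat.cast_add, h1, h2]
    rw [hb p.2 h2, mul_zero]
  · rw [ha p.1 h1, zero_mul]

lemma Shape.one : Shape ℓ 0 (1 : PowerSeries K) := by
  intro n hn
  rw [coeff_one, if_neg]
  rintro rfl
  simp at hn

lemma Shape.C (c : K) : Shape ℓ 0 (C c) := by
  intro n hn
  rw [coeff_C, if_neg]
  rintro rfl
  simp at hn

lemma Shape.X : Shape ℓ 1 (X : PowerSeries K) := by
  intro n hn
  rw [coeff_X, if_neg]
  rintro rfl
  simp at hn

lemma Shape.mul0 {a b : PowerSeries K} (ha : Shape ℓ 0 a) (hb : Shape ℓ 0 b) :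
    Shape ℓ 0 (a * b) := by simpa using ha.mul hb

lemma Shape.mul01 {a b : PowerSeries K} (ha : Shape ℓ 0 a) (hb : Shape ℓ 1 b) :
    Shape ℓ 1 (a * b) := by simpa using ha.mul hb

lemma Shape.mul10 {a b : PowerSeries K} (ha : Shape ℓ 1 a) (hb : Shape ℓ 0 b) :
    Shape ℓ 1 (a * b) := by simpa using ha.mul hb

lemma Shape.pow {r : ZMod ℓ} {a : PowerSeries K} (ha : Shape ℓ r a) (k : ℕ) :
    Shape ℓ ((k : ZMod ℓ) * r) (a ^ k) := by
  induction k with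
  | zero => simpa using Shape.one
  | succ k ih =>
      have := ih.mul ha
      have h : ((k : ZMod ℓ) * r + r) = ((k + 1 : ℕ) : ZMod ℓ) * r := by
        push_cast
        ring
      rw [pow_succ]
      rwa [h] at this

lemma Shape.add {r : ZMod ℓ} {a b : PowerSeries K} (ha : Shape ℓ r a) (hb : Shape ℓ r b) :
    Shape ℓ r (a + b) := by
  intro n hn
  rw [map_add, ha n hn, hb n hn, add_zero]

lemma Shape.sub {r : ZMod ℓ} {a b : PowerSeries K} (ha : Shape ℓ r a) (hb : Shape ℓ r b) :
    Shape ℓ r (a - b) := by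
  intro n hn
  rw [map_sub, ha n hn, hb n hn, sub_zero]

lemma Shape.inv {a : PowerSeries K} (ha : Shape ℓ 0 a) (ha0 : constantCoeff a ≠ 0) :
    Shape ℓ 0 (a⁻¹ : PowerSeries K) := by
  intro n hn
  induction n using Nat.strong_induction_on with
  | _ n ih =>
    have hn0 : n ≠ 0 := by rintro rfl; simp at hn
    have h1 : coeff n (a * a⁻¹) = 0 := by
      rw [PowerSeries.mul_inv_cancel a ha0, coeff_one, if_neg hn0]
    rw [PowerSeries.coeff_mul] at h1
    have h2 : ∀ p ∈ Finset.HasAntidiagonal.antidiagonal n, p ≠ (0, n) →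
        coeff p.1 a * coeff p.2 a⁻¹ = 0 := by
      intro p hp hpne
      rw [Finset.HasAntidiagonal.mem_antidiagonal] at hp
      by_cases hc : (p.2 : ZMod ℓ) = 0
      · have : (p.1 : ZMod ℓ) ≠ 0 := by
          intro h
          apply hn
          rw [← hp, Nat.cast_add, h, hc, add_zero]
        rw [ha p.1 this, zero_mul]
      · have hlt : p.2 < n := by
          rcases Nat.lt_or_ge p.2 n with h | h
          · exact h
          · exfalso; apply hpne
            have h2 : p.2 = n := by omega
            have h1 : p.1 = 0 := by omega
            ext <;> simp [*]
        rw [ih p.2 hlt hc, mul_zero]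
    rw [Finset.sum_eq_single (0, n)] at h1
    · rcases mul_eq_zero.mp h1 with h | h
      · exact absurd h (by simpa using ha0)
      · exact h
    · intro p hp hpne; exact h2 p hp hpne
    · intro h; exact absurd (by simp) h

lemma Shape.pcomp {r : ZMod ℓ} {a f : PowerSeries K} (ha : Shape ℓ r a)
    (hf : Shape ℓ 1 f) : Shape ℓ r (pcomp a f) := by
  intro n hn
  rw [coeff_pcomp]
  refine Finset.sum_eq_zero fun k _ => ?_
  by_cases hk : (k : ZMod ℓ) = r
  · have : Shape ℓ ((k : ZMod ℓ) * 1) (f ^ k) := hf.pow k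
    rw [mul_one] at this
    rw [this n (by rw [hk]; exact hn), mul_zero]
  · rw [ha k hk, zero_mul]

lemma Shape.pdivX {f : PowerSeries K} (hf : Shape ℓ 1 f) : Shape ℓ 0 (pdivX f) := by
  intro n hn
  rw [coeff_pdivX]
  apply hf
  intro h
  apply hn
  have : ((n : ZMod ℓ) + 1) = 1 := by push_cast at h; exact h
  exact by linear_combination this

lemma coeff_pow_congr {a b : PowerSeries K} (ha : constantCoeff a = 0)
    (hb : constantCoeff b = 0) {n : ℕ} (hab : ∀ i < n, coeff i a = coeff i b) :
    ∀ k j, j < n + k → coeff j (a ^ (k + 1)) = coeff j (b ^ (k + 1)) := by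
  intro k
  induction k with
  | zero =>
      intro j hj
      simpa using hab j (by omega)
  | succ k ih =>
      intro j hj
      rw [show a ^ (k + 1 + 1) = a * a ^ (k + 1) from pow_succ' a (k + 1),
        show b ^ (k + 1 + 1) = b * b ^ (k + 1) from pow_succ' b (k + 1),
        PowerSeries.coeff_mul, PowerSeries.coeff_mul]
      refine Finset.sum_congr rfl fun p hp => ?_
      rw [Finset.HasAntidiagonal.mem_antidiagonal] at hp
      rcases Nat.lt_or_ge p.1 n with h1 | h1
      · rcases Nat.eq_zero_or_pos p.1 with h0 | h0
        · rw [h0, coeff_zero_eq_constantCoeff_apply, coeff_zero_eq_constantCoeff_apply,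
            ha, hb, zero_mul, zero_mul]
        · rw [hab p.1 h1, ih p.2 (by omega)]
      · have hlt : p.2 < k + 1 := by omega
        rw [coeff_pow_eq_zero ha hlt, coeff_pow_eq_zero hb hlt, mul_zero, mul_zero]

/-- coefficients of the compositional inverse. -/
noncomputable def cinvAux (f : PowerSeries K) : ℕ → K
  | 0 => 0
  | 1 => (coeff 1 f)⁻¹
  | n + 2 =>
      -(coeff 1 f)⁻¹ *
        ∑ k ∈ Finset.range (n + 3),
          (if 2 ≤ k then
            coeff k f *
              coeff (n + 2)
                ((PowerSeries.mk fun i => if _ : i < n + 2 then cinvAux f i else 0) ^ k)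
          else 0)

/-- The compositional inverse. -/
noncomputable def cinv (f : PowerSeries K) : PowerSeries K := PowerSeries.mk (cinvAux f)

lemma constantCoeff_cinv (f : PowerSeries K) : constantCoeff (cinv f) = 0 := by
  rw [← coeff_zero_eq_constantCoeff, cinv, coeff_mk, cinvAux]

lemma coeff_one_cinv (f : PowerSeries K) : coeff 1 (cinv f) = (coeff 1 f)⁻¹ := by
  rw [cinv, coeff_mk, cinvAux]

lemma cinv_trunc_pow (f : PowerSeries K) (n : ℕ) {k : ℕ} (hk : 2 ≤ k) :
    coeff n ((PowerSeries.mk fun i => if _ : i < n then cinvAux f i else 0) ^ k) =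
      coeff n ((cinv f) ^ k) := by
  obtain ⟨k', rfl⟩ : ∃ k', k = k' + 1 := ⟨k - 1, by omega⟩
  apply coeff_pow_congr
  · rw [← coeff_zero_eq_constantCoeff, coeff_mk]
    rcases Nat.eq_zero_or_pos n with h | h
    · simp [h]
    · simp only [dif_pos h]; rw [cinvAux]
  · exact constantCoeff_cinv f
  · intro i hi
    rw [coeff_mk, dif_pos hi, cinv, coeff_mk]
  · omega

lemma pcomp_cinv_eq_X {f : PowerSeries K} (hf0 : constantCoeff f = 0)
    (hf1 : coeff 1 f ≠ 0) : pcomp f (cinv f) = X := by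
  ext n
  match n with
  | 0 =>
      rw [coeff_pcomp]
      simp [hf0]
  | 1 =>
      rw [coeff_pcomp]
      rw [Finset.sum_range_succ, Finset.sum_range_one]
      simp only [pow_zero, pow_one, coeff_one_cinv]
      rw [coeff_zero_eq_constantCoeff_apply, hf0]
      simp [mul_inv_cancel₀ hf1, coeff_X]
  | n + 2 =>
      rw [coeff_pcomp, coeff_X, if_neg (by omega)]
      have split : ∀ k ∈ Finset.range (n + 3),
          coeff k f * coeff (n + 2) ((cinv f) ^ k) =
            (if k = 1 then coeff 1 f * coeff (n + 2) (cinv f) else 0) +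
              (if 2 ≤ k then coeff k f * coeff (n + 2) ((cinv f) ^ k) else 0) := by
        intro k _
        match k with
        | 0 => simp [coeff_zero_eq_constantCoeff_apply, hf0]
        | 1 => simp
        | k + 2 => simp
      rw [Finset.sum_congr rfl split, Finset.sum_add_distrib,
        Finset.sum_ite_eq' (Finset.range (n + 3)) 1
          (fun k => coeff 1 f * coeff (n + 2) (cinv f)),
        if_pos (by simp)]
      have hear : coeff (n + 2) (cinv f) = cinvAux f (n + 2) := by rw [cinv, coeff_mk]
      rw [hear, cinvAux]
      have congr2 : ∀ k ∈ Finset.range (n + 3),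
          (if 2 ≤ k then
            coeff k f *
              coeff (n + 2)
                ((PowerSeries.mk fun i => if _ : i < n + 2 then cinvAux f i else 0) ^ k)
          else 0) = (if 2 ≤ k then coeff k f * coeff (n + 2) ((cinv f) ^ k) else 0) := by
        intro k _
        by_cases hk : 2 ≤ k
        · rw [if_pos hk, if_pos hk, cinv_trunc_pow f (n + 2) hk]
        · rw [if_neg hk, if_neg hk]
      rw [Finset.sum_congr rfl congr2]
      field_simp
      try ring

lemma cinv_shape {f : PowerSeries K} (hf : Shape ℓ 1 f) : Shape ℓ 1 (cinv f) := by
  intro n hn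
  induction n using Nat.strong_induction_on with
  | _ n ih =>
    match n with
    | 0 => rw [cinv, coeff_mk, cinvAux]
    | 1 => exact absurd (by push_cast; rfl) hn
    | n + 2 =>
      rw [cinv, coeff_mk, cinvAux]
      have : ∀ k ∈ Finset.range (n + 3),
          (if 2 ≤ k then
            coeff k f *
              coeff (n + 2)
                ((PowerSeries.mk fun i => if _ : i < n + 2 then cinvAux f i else 0) ^ k)
          else 0) = 0 := by
        intro k _
        by_cases hk : 2 ≤ k
        · rw [if_pos hk]
          by_cases hk1 : (k : ZMod ℓ) = 1
          · have hT : Shape ℓ 1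
                (PowerSeries.mk fun i => if _ : i < n + 2 then cinvAux f i else 0) := by
              intro i hi
              rw [coeff_mk]
              split
              · next h =>
                  have := ih i h hi
                  rwa [cinv, coeff_mk] at this
              · rfl
            have := hT.pow k
            rw [hk1, mul_one] at this
            rw [this (n + 2) hn, mul_zero]
          · rw [hf k hk1, zero_mul]
        · rw [if_neg hk]
      rw [Finset.sum_congr rfl this, Finset.sum_const_zero, mul_zero]

lemma cinv_pcomp_eq_X {f : PowerSeries K} (hf0 : constantCoeff f = 0)
    (hf1 : coeff 1 f ≠ 0) : pcomp (cinv f) f = X := by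
  set g := cinv f with hg
  have hg0 : constantCoeff g = 0 := constantCoeff_cinv f
  have hg1 : coeff 1 g ≠ 0 := by rw [hg, coeff_one_cinv]; exact inv_ne_zero hf1
  set w := cinv g with hw
  have hw0 : constantCoeff w = 0 := constantCoeff_cinv g
  have hgw : pcomp g w = X := pcomp_cinv_eq_X hg0 hg1
  have hfw : f = w := by
    have h1 : pcomp (pcomp f g) w = pcomp f (pcomp g w) := pcomp_assoc hg0 hw0 f
    rw [pcomp_cinv_eq_X hf0 hf1, pcomp_X hw0, hgw, pcomp_id] at h1
    exact h1.symm
  rw [← hfw] at hgw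
  exact hgw

lemma coeff_one_mul {A P : PowerSeries K} (hP : constantCoeff P = 0) :
    coeff 1 (A * P) = constantCoeff A * coeff 1 P := by
  rw [PowerSeries.coeff_mul, Finset.Nat.sum_antidiagonal_eq_sum_range_succ_mk,
    Finset.sum_range_succ, Finset.sum_range_one]
  simp [hP, coeff_zero_eq_constantCoeff_apply]

lemma mod_ne_iff {ℓ n : ℕ} : n % ℓ ≠ 1 % ℓ ↔ (n : ZMod ℓ) ≠ 1 := by
  rw [Ne, Ne, ← ZMod.natCast_eq_natCast_iff' n 1 ℓ, Nat.cast_one]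

lemma dvd_ne_iff {ℓ n : ℕ} : ¬ℓ ∣ n ↔ (n : ZMod ℓ) ≠ 0 := by
  rw [Ne, ZMod.natCast_eq_zero_iff]

lemma inTl_iff {g : PowerSeries K} : InTl ℓ g ↔ Shape ℓ 0 g := by
  constructor
  · intro h n hn
    exact h n (dvd_ne_iff.mpr hn)
  · intro h n hn
    exact h n (dvd_ne_iff.mp hn)

lemma isMult_iff {f : PowerSeries K} :
    IsMult ℓ f ↔ constantCoeff f = 0 ∧ Shape ℓ 1 f ∧ coeff 1 f ≠ 0 := by
  unfold IsMult
  refine and_congr_right fun _ => and_congr_left fun _ => ?_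
  constructor
  · intro h n hn
    exact h n (mod_ne_iff.mpr hn)
  · intro h n hn
    exact h n (mod_ne_iff.mp hn)

end MaR


namespace MaR
variable {K : Type*} [Field K]

lemma isMaR_iff {m : ℕ} {b g f : PowerSeries K} {F : Fin (m + 1) → PowerSeries K} :
    IsMaR m (b, g, F, f) ↔
      Shape (m + 1) 0 b ∧ constantCoeff b ≠ 0 ∧ Shape (m + 1) 0 g ∧
        constantCoeff g ≠ 0 ∧
        (∀ j, constantCoeff (F j) = 0 ∧ Shape (m + 1) 1 (F j) ∧ coeff 1 (F j) ≠ 0) ∧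
        (constantCoeff f = 0 ∧ Shape (m + 1) 1 f ∧ coeff 1 f ≠ 0) ∧
        f ^ (m + 1) = ∏ j, F j := by
  unfold IsMaR
  simp only [inTl_iff, isMult_iff]

lemma pdivX_root {m : ℕ} {f : PowerSeries K} {F : Fin (m + 1) → PowerSeries K}
    (hroot : f ^ (m + 1) = ∏ j, F j) (hf0 : constantCoeff f = 0)
    (hF0 : ∀ j, constantCoeff (F j) = 0) :
    (pdivX f) ^ (m + 1) = ∏ j, pdivX (F j) := by
  have h1 : (X : PowerSeries K) ^ (m + 1) * (pdivX f) ^ (m + 1) =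
      X ^ (m + 1) * ∏ j, pdivX (F j) := by
    rw [← mul_pow, X_mul_pdivX hf0, hroot]
    calc ∏ j, F j = ∏ j, ((X : PowerSeries K) * pdivX (F j)) :=
          Finset.prod_congr rfl fun j _ => (X_mul_pdivX (hF0 j)).symm
      _ = (∏ _j : Fin (m + 1), (X : PowerSeries K)) * ∏ j, pdivX (F j) :=
          Finset.prod_mul_distrib
      _ = X ^ (m + 1) * ∏ j, pdivX (F j) := by
          rw [Finset.prod_const, Finset.card_univ, Fintype.card_fin]
  exact mul_left_cancel₀ (pow_ne_zero _ X_ne_zero) h1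

lemma maR_closure {m : ℕ}
    (p q : PowerSeries K × PowerSeries K × (Fin (m + 1) → PowerSeries K) × PowerSeries K)
    (hp : IsMaR m p) (hq : IsMaR m q) : IsMaR m (maMul p q) := by
  obtain ⟨b, g, F, f⟩ := p
  obtain ⟨c, d, H, e⟩ := q
  rw [isMaR_iff] at hp hq
  obtain ⟨hbS, hb0, hgS, hg0, hF, ⟨hf0, hfS, hf1⟩, hroot⟩ := hp
  obtain ⟨hcS, hc0, hdS, hd0, hH, ⟨he0, heS, he1⟩, hqroot⟩ := hq
  have hfp0 : constantCoeff (pdivX f) ≠ 0 := by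
    rw [constantCoeff_pdivX]; exact hf1
  have hfinvS : Shape (m + 1) 0 ((pdivX f)⁻¹) := hfS.pdivX.inv hfp0
  have hPl0 : constantCoeff (pdivX (F (Fin.last m))) ≠ 0 := by
    rw [constantCoeff_pdivX]; exact (hF _).2.2
  have hPlinvS : Shape (m + 1) 0 ((pdivX (F (Fin.last m)))⁻¹) :=
    ((hF _).2.1.pdivX).inv hPl0
  show IsMaR m (_, _, _, _)
  rw [isMaR_iff]
  refine ⟨?_, ?_, ?_, ?_, ?_, ⟨?_, ?_, ?_⟩, ?_⟩
  · exact ((Shape.C _).mul0 hbS).add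
      ((hgS.mul0 hPlinvS).mul0 ((hcS.pcomp hfS).sub (Shape.C _)))
  · have : constantCoeff
        (C (constantCoeff c) * b +
          g * (pdivX (F (Fin.last m)))⁻¹ * (pcomp c f - C (constantCoeff c))) =
        constantCoeff c * constantCoeff b := by
      simp [map_add, map_mul, map_sub, constantCoeff_pcomp, constantCoeff_C]
    rw [this]
    exact mul_ne_zero hc0 hb0
  · exact hgS.mul0 (hdS.pcomp hfS)
  · rw [map_mul, constantCoeff_pcomp]
    exact mul_ne_zero hg0 hd0
  · intro j
    refine ⟨?_, ?_, ?_⟩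
    · rw [map_mul, constantCoeff_pcomp, (hH j).1, mul_zero]
    · exact (((hF j).2.1.pdivX).mul0 hfinvS).mul01 ((hH j).2.1.pcomp hfS)
    · rw [coeff_one_mul (by rw [constantCoeff_pcomp]; exact (hH j).1), coeff_one_pcomp]
      rw [map_mul, constantCoeff_pdivX, PowerSeries.constantCoeff_inv, constantCoeff_pdivX]
      exact mul_ne_zero (mul_ne_zero (hF j).2.2 (inv_ne_zero hf1))
        (mul_ne_zero (hH j).2.2 hf1)
  · rw [constantCoeff_pcomp]; exact he0
  · exact heS.pcomp hfS
  · rw [coeff_one_pcomp]; exact mul_ne_zero he1 hf1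
  · calc (pcomp e f) ^ (m + 1)
        = 1 ^ (m + 1) * pcomp (e ^ (m + 1)) f := by rw [one_pow, one_mul, pcomp_pow hf0]
      _ = (pdivX f * (pdivX f)⁻¹) ^ (m + 1) * pcomp (∏ j, H j) f := by
          rw [PowerSeries.mul_inv_cancel _ hfp0, hqroot]
      _ = ((pdivX f) ^ (m + 1) * ((pdivX f)⁻¹) ^ (m + 1)) * ∏ j, pcomp (H j) f := by
          rw [mul_pow, pcomp_prod hf0]
      _ = ((∏ j, pdivX (F j)) * ∏ _j : Fin (m + 1), (pdivX f)⁻¹) * ∏ j, pcomp (H j) f := by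
          rw [pdivX_root hroot hf0 (fun j => (hF j).1), Finset.prod_const,
            Finset.card_univ, Fintype.card_fin]
      _ = ∏ j, pdivX (F j) * (pdivX f)⁻¹ * pcomp (H j) f := by
          rw [← Finset.prod_mul_distrib, ← Finset.prod_mul_distrib]

lemma one_inv' : (1 : PowerSeries K)⁻¹ = 1 :=
  inv_eq_of_mul_eq_one (by simp) (by simp)

lemma maR_id {m : ℕ} :
    IsMaR m ((1, 1, fun _ => X, X) :
      PowerSeries K × PowerSeries K × (Fin (m + 1) → PowerSeries K) × PowerSeries K) := by
  rw [isMaR_iff]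
  refine ⟨Shape.one, by simp, Shape.one, by simp,
    fun j => ⟨constantCoeff_X, Shape.X, by simp⟩,
    ⟨constantCoeff_X, Shape.X, by simp⟩, ?_⟩
  rw [Finset.prod_const, Finset.card_univ, Fintype.card_fin]

lemma maR_id_left {m : ℕ}
    (p : PowerSeries K × PowerSeries K × (Fin (m + 1) → PowerSeries K) × PowerSeries K)
    (hp : IsMaR m p) : maMul (1, 1, fun _ => X, X) p = p := by
  obtain ⟨b, g, F, f⟩ := p
  show (_, _, _, _) = (b, g, F, f)
  simp only [Prod.mk.injEq]
  refine ⟨?_, ?_, ?_, ?_⟩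
  · show C (constantCoeff b) * 1 +
        1 * (pdivX ((fun _ : Fin (m + 1) => (X : PowerSeries K)) (Fin.last m)))⁻¹ *
          (pcomp b X - C (constantCoeff b)) = b
    simp only [pdivX_X, one_inv', pcomp_id]
    ring
  · show 1 * pcomp g X = g
    rw [pcomp_id, one_mul]
  · funext j
    show pdivX (X : PowerSeries K) * (pdivX (X : PowerSeries K))⁻¹ * pcomp (F j) X = F j
    rw [pdivX_X, one_inv', pcomp_id]
    ring
  · exact pcomp_id f

lemma maR_id_right {m : ℕ}
    (p : PowerSeries K × PowerSeries K × (Fin (m + 1) → PowerSeries K) × PowerSeries K)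
    (hp : IsMaR m p) : maMul p (1, 1, fun _ => X, X) = p := by
  obtain ⟨b, g, F, f⟩ := p
  rw [isMaR_iff] at hp
  obtain ⟨hbS, hb0, hgS, hg0, hF, ⟨hf0, hfS, hf1⟩, hroot⟩ := hp
  have hfp0 : constantCoeff (pdivX f) ≠ 0 := by
    rw [constantCoeff_pdivX]; exact hf1
  show (_, _, _, _) = (b, g, F, f)
  simp only [Prod.mk.injEq]
  refine ⟨?_, ?_, ?_, ?_⟩
  · show C (constantCoeff (1 : PowerSeries K)) * b +
        g * (pdivX (F (Fin.last m)))⁻¹ *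
          (pcomp 1 f - C (constantCoeff (1 : PowerSeries K))) = b
    rw [pcomp_one, map_one, map_one, sub_self, mul_zero, one_mul, add_zero]
  · show g * pcomp 1 f = g
    rw [pcomp_one, mul_one]
  · funext j
    show pdivX (F j) * (pdivX f)⁻¹ * pcomp X f = F j
    rw [pcomp_X hf0]
    set u := pdivX f with hu
    have hfu : f = X * u := (X_mul_pdivX hf0).symm
    rw [hfu, show pdivX (F j) * u⁻¹ * (X * u) = u * u⁻¹ * (X * pdivX (F j)) by ring,
      PowerSeries.mul_inv_cancel _ hfp0, one_mul, X_mul_pdivX (hF j).1]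
  · exact pcomp_X hf0

lemma maR_assoc {m : ℕ}
    (p q r : PowerSeries K × PowerSeries K × (Fin (m + 1) → PowerSeries K) × PowerSeries K)
    (hp : IsMaR m p) (hq : IsMaR m q) (hr : IsMaR m r) :
    maMul (maMul p q) r = maMul p (maMul q r) := by
  obtain ⟨b, g, F, f⟩ := p
  obtain ⟨c, d, H, e⟩ := q
  obtain ⟨a, u, L, w⟩ := r
  rw [isMaR_iff] at hp hq hr
  obtain ⟨hbS, hb0, hgS, hg0, hF, ⟨hf0, hfS, hf1⟩, hroot⟩ := hp
  obtain ⟨hcS, hc0, hdS, hd0, hH, ⟨he0, heS, he1⟩, hqroot⟩ := hq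
  obtain ⟨haS, ha0, huS, hu0, hL, ⟨hw0, hwS, hw1⟩, hrroot⟩ := hr
  have hQf0 : constantCoeff (pdivX f) ≠ 0 := by rw [constantCoeff_pdivX]; exact hf1
  have hQe0 : constantCoeff (pdivX e) ≠ 0 := by rw [constantCoeff_pdivX]; exact he1
  have hsE0 : constantCoeff (pcomp e f) = 0 := by rw [constantCoeff_pcomp]; exact he0
  have hSe0 : constantCoeff (pcomp (pdivX e) f) ≠ 0 := by
    rw [constantCoeff_pcomp]; exact hQe0
  -- key rewriting of pdivX of a third-type component
  have hsF : ∀ j, pdivX (pdivX (F j) * (pdivX f)⁻¹ * pcomp (H j) f) =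
      pdivX (F j) * pcomp (pdivX (H j)) f := by
    intro j
    rw [mul_assoc, show pdivX (F j) * ((pdivX f)⁻¹ * pcomp (H j) f) =
        (pdivX (F j) * (pdivX f)⁻¹) * pcomp (H j) f by ring,
      pdivX_mul_left (by rw [constantCoeff_pcomp]; exact (hH j).1),
      pdivX_pcomp (hH j).1 hf0]
    have hc : (pdivX f)⁻¹ * pdivX f = 1 := PowerSeries.inv_mul_cancel _ hQf0
    linear_combination (pdivX (F j) * pcomp (pdivX (H j)) f) * hc
  have hRl0 : ∀ j : Fin (m + 1), constantCoeff (pcomp (pdivX (H j)) f) ≠ 0 := by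
    intro j
    rw [constantCoeff_pcomp, constantCoeff_pdivX]
    exact (hH j).2.2
  simp only [maMul, Prod.mk.injEq]
  refine ⟨?_, ?_, ?_, ?_⟩
  · -- first component
    have h1 : constantCoeff
        (C (constantCoeff a) * c +
          d * (pdivX (H (Fin.last m)))⁻¹ * (pcomp a e - C (constantCoeff a))) =
        constantCoeff a * constantCoeff c := by
      simp [map_add, map_mul, map_sub, constantCoeff_pcomp, constantCoeff_C]
    rw [h1, hsF (Fin.last m),
      mul_inv' (by rw [constantCoeff_pdivX]; exact (hF _).2.2) (hRl0 _)]
    rw [pcomp_add, pcomp_C_mul, pcomp_mul hf0, pcomp_mul hf0, pcomp_sub, pcomp_C,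
      pcomp_inv hf0 (by rw [constantCoeff_pdivX]; exact (hH _).2.2),
      pcomp_assoc he0 hf0, map_mul]
    ring
  · -- second component
    rw [pcomp_mul hf0, pcomp_assoc he0 hf0]
    ring
  · -- third components
    funext j
    rw [hsF j, pdivX_pcomp he0 hf0, mul_inv' hQf0 hSe0,
      pcomp_mul hf0, pcomp_mul hf0, pcomp_inv hf0 hQe0, pcomp_assoc he0 hf0]
    ring
  · -- fourth component
    exact (pcomp_assoc he0 hf0 w).symm

lemma maR_inv {m : ℕ}
    (p : PowerSeries K × PowerSeries K × (Fin (m + 1) → PowerSeries K) × PowerSeries K)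
    (hp : IsMaR m p) :
    ∃ q : PowerSeries K × PowerSeries K × (Fin (m + 1) → PowerSeries K) × PowerSeries K,
      IsMaR m q ∧ maMul p q = (1, 1, fun _ => X, X) ∧
        maMul q p = (1, 1, fun _ => X, X) := by
  obtain ⟨b, g, F, f⟩ := p
  rw [isMaR_iff] at hp
  obtain ⟨hbS, hb0, hgS, hg0, hF, ⟨hf0, hfS, hf1⟩, hroot⟩ := hp
  obtain ⟨fb, hfb⟩ : ∃ fb, fb = cinv f := ⟨_, rfl⟩
  have hfb0 : constantCoeff fb = 0 := by rw [hfb]; exact constantCoeff_cinv f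
  have hfb1 : coeff 1 fb ≠ 0 := by
    rw [hfb, coeff_one_cinv]; exact inv_ne_zero hf1
  have hfbS : Shape (m + 1) 1 fb := by rw [hfb]; exact cinv_shape hfS
  have hffb : pcomp f fb = X := by rw [hfb]; exact pcomp_cinv_eq_X hf0 hf1
  have hfbf : pcomp fb f = X := by rw [hfb]; exact cinv_pcomp_eq_X hf0 hf1
  clear hfb
  have hQf0 : constantCoeff (pdivX f) ≠ 0 := by rw [constantCoeff_pdivX]; exact hf1
  have hQfb0 : constantCoeff (pdivX fb) ≠ 0 := by rw [constantCoeff_pdivX]; exact hfb1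
  have hPj0 : ∀ j : Fin (m + 1), constantCoeff (pdivX (F j)) ≠ 0 := fun j => by
    rw [constantCoeff_pdivX]; exact (hF j).2.2
  obtain ⟨c0, hc0def⟩ : ∃ c : K, c = (constantCoeff b)⁻¹ := ⟨_, rfl⟩
  have hc00 : c0 ≠ 0 := by rw [hc0def]; exact inv_ne_zero hb0
  have hc0b : constantCoeff b * c0 = 1 := by
    rw [hc0def]; exact mul_inv_cancel₀ hb0
  obtain ⟨cA, hcA⟩ : ∃ x : PowerSeries K,
      x = C c0 + g⁻¹ * pdivX (F (Fin.last m)) * (1 - C c0 * b) := ⟨_, rfl⟩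
  obtain ⟨Hv, hHv⟩ : ∃ Hv : Fin (m + 1) → PowerSeries K,
      Hv = fun j => pcomp (f * (pdivX (F j))⁻¹) fb := ⟨_, rfl⟩
  have hHvj : ∀ j, Hv j = pcomp (f * (pdivX (F j))⁻¹) fb := fun j => by rw [hHv]
  clear hHv
  -- key identities
  have key : pdivX fb * pcomp (pdivX f) fb = 1 := by
    have h := pdivX_pcomp hf0 hfb0
    rw [hffb, pdivX_X] at h
    exact h.symm
  have hCj0 : ∀ j : Fin (m + 1), constantCoeff (pcomp (pdivX (F j)) fb) ≠ 0 := fun j => by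
    rw [constantCoeff_pcomp]; exact hPj0 j
  have hpdivXHinv : ∀ j : Fin (m + 1), pdivX (Hv j) = (pcomp (pdivX (F j)) fb)⁻¹ := by
    intro j
    rw [hHvj j]
    have harg0 : constantCoeff (f * (pdivX (F j))⁻¹) = 0 := by
      rw [map_mul, hf0, zero_mul]
    rw [pdivX_pcomp harg0 hfb0, mul_comm f ((pdivX (F j))⁻¹),
      pdivX_mul_left hf0, pcomp_mul hfb0, pcomp_inv hfb0 (hPj0 j)]
    linear_combination ((pcomp (pdivX (F j)) fb)⁻¹) * key
  have hpcompHinvf : ∀ j : Fin (m + 1), pcomp (Hv j) f = f * (pdivX (F j))⁻¹ := by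
    intro j
    rw [hHvj j, pcomp_assoc hfb0 hf0, hfbf, pcomp_id]
  have hconstcA : constantCoeff cA = c0 := by
    rw [hcA]
    simp only [map_add, map_mul, map_sub, map_one, constantCoeff_C,
      PowerSeries.constantCoeff_inv]
    rw [mul_comm c0, hc0b, sub_self, mul_zero, add_zero]
  refine ⟨(pcomp cA fb, pcomp g⁻¹ fb, Hv, fb), ?_, ?_, ?_⟩
  · -- IsMaR q
    rw [isMaR_iff]
    refine ⟨?_, ?_, ?_, ?_, ?_, ⟨hfb0, hfbS, hfb1⟩, ?_⟩
    · refine Shape.pcomp ?_ hfbS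
      rw [hcA]
      exact (Shape.C _).add (((hgS.inv hg0).mul0 ((hF (Fin.last m)).2.1.pdivX)).mul0
        (Shape.one.sub ((Shape.C _).mul0 hbS)))
    · rw [constantCoeff_pcomp, hconstcA]; exact hc00
    · exact (hgS.inv hg0).pcomp hfbS
    · rw [constantCoeff_pcomp, PowerSeries.constantCoeff_inv]
      exact inv_ne_zero hg0
    · intro j
      refine ⟨?_, ?_, ?_⟩
      · rw [hHvj j]
        simp only [constantCoeff_pcomp, map_mul, hf0, zero_mul]
      · rw [hHvj j]
        exact (hfS.mul10 (((hF j).2.1.pdivX).inv (hPj0 j))).pcomp hfbS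
      · rw [hHvj j]
        simp only [coeff_one_pcomp]
        rw [mul_comm f ((pdivX (F j))⁻¹), coeff_one_mul hf0,
          PowerSeries.constantCoeff_inv, constantCoeff_pdivX]
        exact mul_ne_zero (mul_ne_zero (inv_ne_zero ((hF j).2.2)) hf1) hfb1
    · -- root: fb ^ ℓ = ∏ Hv j
      have h1 : ∏ j, Hv j = pcomp (∏ j, f * (pdivX (F j))⁻¹) fb := by
        rw [pcomp_prod hfb0]
        exact Finset.prod_congr rfl fun j _ => hHvj j
      have h2 : ∏ j : Fin (m + 1), f * (pdivX (F j))⁻¹ = (X : PowerSeries K) ^ (m + 1) := by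
        rw [Finset.prod_mul_distrib, Finset.prod_const, Finset.card_univ, Fintype.card_fin,
          ← prod_inv' _ _ (fun j _ => hPj0 j), ← pdivX_root hroot hf0 (fun j => (hF j).1)]
        obtain ⟨u, hu⟩ : ∃ u, u = pdivX f := ⟨_, rfl⟩
        rw [← hu]
        have hfX : f = X * u := by rw [hu]; exact (X_mul_pdivX hf0).symm
        have hu0 : constantCoeff u ≠ 0 := by rw [hu]; exact hQf0
        have hcan : u ^ (m + 1) * (u ^ (m + 1))⁻¹ = 1 :=
          PowerSeries.mul_inv_cancel _ (by rw [map_pow]; exact pow_ne_zero _ hu0)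
        rw [hfX, mul_pow]
        linear_combination ((X : PowerSeries K) ^ (m + 1)) * hcan
      rw [h1, h2, pcomp_pow hfb0, pcomp_X hfb0]
  · -- maMul p q = identity
    simp only [maMul, Prod.mk.injEq]
    refine ⟨?_, ?_, ?_, hfbf⟩
    · have hpc : pcomp (pcomp cA fb) f = cA := by
        rw [pcomp_assoc hfb0 hf0, hfbf, pcomp_id]
      rw [constantCoeff_pcomp, hconstcA, hpc, hcA]
      have hgg : g * g⁻¹ = 1 := PowerSeries.mul_inv_cancel _ hg0
      have hPP : (pdivX (F (Fin.last m)))⁻¹ * pdivX (F (Fin.last m)) = 1 :=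
        PowerSeries.inv_mul_cancel _ (hPj0 _)
      linear_combination ((pdivX (F (Fin.last m)))⁻¹ * pdivX (F (Fin.last m)) *
        (1 - C c0 * b)) * hgg + ((1 - C c0 * b)) * hPP
    · rw [pcomp_assoc hfb0 hf0, hfbf, pcomp_id, PowerSeries.mul_inv_cancel _ hg0]
    · funext j
      rw [hpcompHinvf j]
      obtain ⟨u, hu⟩ : ∃ u, u = pdivX f := ⟨_, rfl⟩
      rw [← hu]
      have hfX : f = X * u := by rw [hu]; exact (X_mul_pdivX hf0).symm
      have hq : u⁻¹ * u = 1 := by rw [hu]; exact PowerSeries.inv_mul_cancel _ hQf0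
      have hpj : pdivX (F j) * (pdivX (F j))⁻¹ = 1 :=
        PowerSeries.mul_inv_cancel _ (hPj0 j)
      rw [hfX]
      linear_combination (X * pdivX (F j) * (pdivX (F j))⁻¹) * hq + X * hpj
  · -- maMul q p = identity
    simp only [maMul, Prod.mk.injEq]
    refine ⟨?_, ?_, ?_, hffb⟩
    · rw [hpdivXHinv (Fin.last m)]
      have hinvinv : ((pcomp (pdivX (F (Fin.last m))) fb)⁻¹)⁻¹ =
          pcomp (pdivX (F (Fin.last m))) fb :=
        inv_eq_of_mul_eq_one
          (by rw [PowerSeries.constantCoeff_inv]; exact inv_ne_zero (hCj0 _))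
          (PowerSeries.inv_mul_cancel _ (hCj0 _))
      rw [hinvinv, hcA, pcomp_add, pcomp_C, pcomp_mul hfb0, pcomp_mul hfb0,
        pcomp_sub, pcomp_one, pcomp_C_mul]
      have hyz : C (constantCoeff b) * C c0 = 1 := by
        rw [← map_mul, hc0b, map_one]
      linear_combination (1 - pcomp g⁻¹ fb * pcomp (pdivX (F (Fin.last m))) fb *
        pcomp b fb) * hyz
    · rw [← pcomp_mul hfb0, PowerSeries.inv_mul_cancel _ hg0, pcomp_one]
    · funext j
      rw [hpdivXHinv j]
      have h3 : pcomp (F j) fb = fb * pcomp (pdivX (F j)) fb := by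
        conv_lhs => rw [← X_mul_pdivX (hF j).1, pcomp_mul hfb0, pcomp_X hfb0]
      rw [h3]
      obtain ⟨Cv, hCv⟩ : ∃ x, x = pcomp (pdivX (F j)) fb := ⟨_, rfl⟩
      rw [← hCv]
      have hCjc : Cv⁻¹ * Cv = 1 := by rw [hCv]; exact PowerSeries.inv_mul_cancel _ (hCj0 j)
      obtain ⟨w, hw⟩ : ∃ w, w = pdivX fb := ⟨_, rfl⟩
      rw [← hw]
      have hufb : w⁻¹ * w = 1 := by rw [hw]; exact PowerSeries.inv_mul_cancel _ hQfb0
      have hfbX : fb = X * w := by rw [hw]; exact (X_mul_pdivX hfb0).symm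
      rw [hfbX]
      linear_combination (X * Cv⁻¹ * Cv) * hufb + X * hCjc

end MaR

/-- The set of multiple almost-Riordan arrays is closed under the stated
multiplication, and forms a group with identity `(1 | 1; t, …, t)`. -/
theorem multiple_almost_riordan_group {K : Type*} [Field K] [CharZero K] (m : ℕ) :
    (∀ p q : PowerSeries K × PowerSeries K × (Fin (m + 1) → PowerSeries K) × PowerSeries K,
      IsMaR m p → IsMaR m q → IsMaR m (maMul p q)) ∧
    (∀ p q r : PowerSeries K × PowerSeries K × (Fin (m + 1) → PowerSeries K) × PowerSeries K,
      IsMaR m p → IsMaR m q → IsMaR m r → maMul (maMul p q) r = maMul p (maMul q r)) ∧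
    IsMaR m ((1, 1, fun _ => X, X) :
      PowerSeries K × PowerSeries K × (Fin (m + 1) → PowerSeries K) × PowerSeries K) ∧
    (∀ p : PowerSeries K × PowerSeries K × (Fin (m + 1) → PowerSeries K) × PowerSeries K,
      IsMaR m p → maMul (1, 1, fun _ => X, X) p = p ∧ maMul p (1, 1, fun _ => X, X) = p) ∧
    (∀ p : PowerSeries K × PowerSeries K × (Fin (m + 1) → PowerSeries K) × PowerSeries K,
      IsMaR m p →
      ∃ q : PowerSeries K × PowerSeries K × (Fin (m + 1) → PowerSeries K) × PowerSeries K,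
        IsMaR m q ∧ maMul p q = (1, 1, fun _ => X, X) ∧
          maMul q p = (1, 1, fun _ => X, X)) :=
  ⟨MaR.maR_closure, MaR.maR_assoc, MaR.maR_id,
    fun p hp => ⟨MaR.maR_id_left p hp, MaR.maR_id_right p hp⟩, MaR.maR_inv⟩
end
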